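/- Let D ⊂ ℝ^d be bounded, let K be a probability kernel on the closure of D with ∫K_x(dy)(y−x) = 0 and ∫K_x(dy)|y−x|² = s·∫K_x(dy) tr(w(y)) for all x, where w is a continuous nonnegative-definite-matrix-valued function and s > 0. If f is continuous on cl(D), f = 0 on the zero set {tr(w)=0}, then for every ε > 0 there exists m ≥ 0 with |f| < ε + m·tr(w) on cl(D); consequently sup_x |∫K_x(dy) f(y)| ≤ ε + (m/s)·sup_x ∫K_x(dy)|y−x|², which tends to ε as s → ∞. -/

import Mathlib

open MeasureTheory

/-- Concentration on the effective boundary. Let `D ⊂ ℝ^d` be bounded, `w` a continuous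
nonnegative definite matrix-valued function, and `K` a probability kernel on `cl D`
with vanishing first moments and second moments `∫‖y−x‖² dK_x = s·∫ tr(w(y)) dK_x`,
`s > 0`. If `f` is continuous on `cl D` and vanishes on `{tr w = 0}`, then for every
`ε > 0` there is `m ≥ 0` with `|f| < ε + m·tr w` on `cl D`, and consequently
`|∫ f dK_x| ≤ ε + (m/s)·∫‖y−x‖² dK_x` for all `x ∈ cl D`. -/
theorem concentration_on_effective_boundary (d : ℕ)
    (D : Set (EuclideanSpace ℝ (Fin d))) (hD : Bornology.IsBounded D)
    (w : EuclideanSpace ℝ (Fin d) → Matrix (Fin d) (Fin d) ℝ)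
    (hw : Continuous w) (hwpos : ∀ y, (w y).PosSemidef)
    (K : EuclideanSpace ℝ (Fin d) → Measure (EuclideanSpace ℝ (Fin d)))
    (hK : ∀ x ∈ closure D, IsProbabilityMeasure (K x))
    (hKsupp : ∀ x ∈ closure D, K x (closure D)ᶜ = 0)
    (s : ℝ) (hs : 0 < s)
    (hmom1 : ∀ x ∈ closure D, (∫ y, (y - x) ∂(K x)) = 0)
    (hmom2 : ∀ x ∈ closure D,
      (∫ y, ‖y - x‖ ^ 2 ∂(K x)) = s * ∫ y, (w y).trace ∂(K x))
    (f : EuclideanSpace ℝ (Fin d) → ℝ) (hf : ContinuousOn f (closure D))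
    (hf0 : ∀ y ∈ closure D, (w y).trace = 0 → f y = 0) :
    ∀ ε > 0, ∃ m : ℝ, 0 ≤ m ∧
      (∀ y ∈ closure D, |f y| < ε + m * (w y).trace) ∧
      ∀ x ∈ closure D,
        |∫ y, f y ∂(K x)| ≤ ε + (m / s) * ∫ y, ‖y - x‖ ^ 2 ∂(K x) := by
  intro ε hε
  have hScomp : IsCompact (closure D) := hD.isCompact_closure
  have htr : Continuous fun y => (w y).trace := hw.matrix_trace
  have htr0 : ∀ y, 0 ≤ (w y).trace := by
    intro y
    rw [Matrix.trace]
    exact Finset.sum_nonneg fun i _ => by simpa using (hwpos y).2 (Finsupp.single i 1)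
  -- Key compactness step
  have key : ∃ m : ℝ, 0 ≤ m ∧ ∀ y ∈ closure D, |f y| < ε + m * (w y).trace := by
    by_contra hcon
    push_neg at hcon
    choose y hyS hy using fun n : ℕ => hcon n (Nat.cast_nonneg n)
    obtain ⟨z, hzS, φ, hφ, hlim⟩ := hScomp.tendsto_subseq hyS
    obtain ⟨M, hM⟩ := hScomp.exists_bound_of_continuousOn hf
    have hM0 : 0 ≤ M := le_trans (norm_nonneg _) (hM z hzS)
    -- trace along subsequence tends to 0
    have h1 : Filter.Tendsto (fun n => (w (y (φ n))).trace) Filter.atTop (nhds 0) := by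
      apply tendsto_of_tendsto_of_tendsto_of_le_of_le' tendsto_const_nhds
        (tendsto_const_div_atTop_nhds_zero_nat M)
      · exact Filter.Eventually.of_forall fun n => htr0 _
      · filter_upwards [Filter.eventually_ge_atTop 1] with n hn
        have hφn : (1 : ℕ) ≤ φ n := le_trans hn (hφ.le_apply)
        have hle := hy (φ n)
        have hfb : |f (y (φ n))| ≤ M := by
          simpa [Real.norm_eq_abs] using hM _ (hyS (φ n))
        have h2 : (φ n : ℝ) * (w (y (φ n))).trace ≤ M := by nlinarith
        have hn0 : (0 : ℝ) < (n : ℝ) := by exact_mod_cast Nat.lt_of_lt_of_le Nat.zero_lt_one hn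
        rw [le_div_iff₀ hn0]
        have hnφ : (n : ℝ) ≤ (φ n : ℝ) := by exact_mod_cast hφ.le_apply
        nlinarith [htr0 (y (φ n))]
    have h2 : Filter.Tendsto (fun n => (w (y (φ n))).trace) Filter.atTop
        (nhds ((w z).trace)) := (htr.tendsto z).comp hlim
    have hz0 : (w z).trace = 0 := tendsto_nhds_unique h2 h1
    have hfz : f z = 0 := hf0 z hzS hz0
    have hlim' : Filter.Tendsto (fun n => y (φ n)) Filter.atTop (nhdsWithin z (closure D)) := by
      apply tendsto_nhdsWithin_of_tendsto_nhds_of_eventually_within _ hlim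
      exact Filter.Eventually.of_forall fun n => hyS (φ n)
    have h3 : Filter.Tendsto (fun n => |f (y (φ n))|) Filter.atTop (nhds |f z|) :=
      (continuous_abs.tendsto _).comp ((hf z hzS).tendsto.comp hlim')
    have hεle : ε ≤ |f z| := by
      apply ge_of_tendsto' h3
      intro n
      have := hy (φ n)
      nlinarith [htr0 (y (φ n)), (Nat.cast_nonneg (φ n) : (0:ℝ) ≤ (φ n : ℝ))]
    rw [hfz, abs_zero] at hεle
    linarith
  obtain ⟨m, hm0, hmlt⟩ := key
  refine ⟨m, hm0, hmlt, ?_⟩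
  intro x hx
  haveI := hK x hx
  have hmemae : ∀ᵐ y ∂(K x), y ∈ closure D := by
    rw [MeasureTheory.ae_iff]
    exact hKsupp x hx
  have hres : (K x).restrict (closure D) = K x :=
    Measure.restrict_eq_self_of_ae_mem hmemae
  have hfm : AEStronglyMeasurable f (K x) := by
    rw [← hres]; exact hf.aestronglyMeasurable measurableSet_closure
  obtain ⟨M, hM⟩ := hScomp.exists_bound_of_continuousOn hf
  have hfint : Integrable f (K x) := by
    apply Integrable.mono' (integrable_const M) hfm
    filter_upwards [hmemae] with y hy using hM y hy
  obtain ⟨C, hC⟩ := hScomp.exists_bound_of_continuousOn htr.continuousOn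
  have htrint : Integrable (fun y => (w y).trace) (K x) := by
    apply Integrable.mono' (integrable_const C) htr.aestronglyMeasurable
    filter_upwards [hmemae] with y hy using hC y hy
  have hgint : Integrable (fun y => ε + m * (w y).trace) (K x) :=
    (integrable_const ε).add (htrint.const_mul m)
  have h1 : |∫ y, f y ∂(K x)| ≤ ∫ y, |f y| ∂(K x) := by
    simpa [Real.norm_eq_abs] using norm_integral_le_integral_norm (μ := K x) f
  have h2 : ∫ y, |f y| ∂(K x) ≤ ∫ y, (ε + m * (w y).trace) ∂(K x) := by
    apply integral_mono_ae hfint.abs hgint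
    filter_upwards [hmemae] with y hy using le_of_lt (hmlt y hy)
  have h3 : ∫ y, (ε + m * (w y).trace) ∂(K x)
      = ε + m * ∫ y, (w y).trace ∂(K x) := by
    rw [integral_add (integrable_const ε) (htrint.const_mul m), integral_const,
      integral_const_mul]
    simp
  have h4 : m * ∫ y, (w y).trace ∂(K x)
      = (m / s) * ∫ y, ‖y - x‖ ^ 2 ∂(K x) := by
    rw [hmom2 x hx]
    field_simp
  linarith
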